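/- Any skew word over {a,b} is eventually periodic but not purely recurrent: if w is a suffix of μ(x^l y x^ω) for some composition μ of the morphisms ψ_a, ψ_b and {x,y} = {a,b}, l ∈ ℕ, but w is not a suffix of μ(x^ω), then w is not recurrent, i.e., some factor of w occurs only finitely often in w. -/

import Mathlib

/-- The morphism ψ_a on {a,b}*: a ↦ a, b ↦ ab, extended to lists. -/
def psiA {A : Type*} [DecidableEq A] (a b : A) : List A → List A :=
  fun l => l.flatMap (fun c => if c = a then [a] else [a, b])

/-- The morphism ψ_b on {a,b}*: a ↦ ba, b ↦ b, extended to lists. -/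
def psiB {A : Type*} [DecidableEq A] (a b : A) : List A → List A :=
  fun l => l.flatMap (fun c => if c = b then [b] else [b, a])

/-- `s` is the image of the infinite word `w` under the (list) morphism `μ`:
every image of a finite prefix of `w` is a prefix of `s`. -/
def IsInfImage {A : Type*} [Inhabited A] (μ : List A → List A) (w s : ℕ → A) : Prop :=
  ∀ n : ℕ, ∀ k < (μ (List.ofFn (fun i : Fin n => w i))).length,
    (μ (List.ofFn (fun i : Fin n => w i)))[k]! = s k

/-- `u` occurs in the infinite word `w` at position `i`. -/
def OccursAt {A : Type*} (u : List A) (w : ℕ → A) (i : ℕ) : Prop :=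
  u = List.ofFn (fun k : Fin u.length => w (i + (k : ℕ)))

/-- `u` is a (finite) factor of the infinite word `w`. -/
def InfFactor {A : Type*} (u : List A) (w : ℕ → A) : Prop := ∃ i, OccursAt u w i

/-- An `ofFn` window occurs at its own position. -/
lemma occursAt_ofFn {A : Type*} (w : ℕ → A) (i n : ℕ) :
    OccursAt (List.ofFn (fun j : Fin n => w (i + (j : ℕ)))) w i := by
  unfold OccursAt
  apply List.ext_getElem
  · simp
  · intro k h1 h2
    simp


/-- `getElem!` version of reading past the left part of an append. -/
lemma getElem!_append_right' {A : Type*} [Inhabited A] (l₁ l₂ : List A) (i : ℕ)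
    (h : l₁.length ≤ i) : (l₁ ++ l₂)[i]! = l₂[i - l₁.length]! := by
  rcases lt_or_ge (i - l₁.length) l₂.length with h2 | h2
  · rw [getElem!_pos l₂ _ h2, getElem!_pos (l₁ ++ l₂) i (by simp; omega),
      List.getElem_append_right h]
  · rw [getElem!_neg l₂ _ (by omega), getElem!_neg (l₁ ++ l₂) i (by simp; omega)]

/-- Any composition of the ψ morphisms is a flatMap with nonempty letter images. -/
lemma exists_flatMap {A : Type*} [DecidableEq A] (a b : A) (L : List Bool) :
    ∃ g : A → List A, (∀ c, g c ≠ []) ∧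
      ∀ u, ((L.map (fun t => if t then psiA a b else psiB a b)).foldr (· ∘ ·) id) u
        = u.flatMap g := by
  induction L with
  | nil =>
    exact ⟨fun c => [c], by simp, fun u => by simp⟩
  | cons hd tl ih =>
    obtain ⟨g, hg, hμg⟩ := ih
    cases hd with
    | true =>
      refine ⟨fun c => (g c).flatMap (fun d => if d = a then [a] else [a, b]),
        fun c h => ?_, fun u => ?_⟩
      · rw [List.flatMap_eq_nil_iff] at h
        obtain ⟨d, hd⟩ := List.exists_mem_of_ne_nil _ (hg c)
        have := h d hd
        split at this <;> simp_all
      · simp only [List.map_cons, List.foldr_cons, Function.comp_apply, if_true]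
        rw [hμg]
        show (u.flatMap g).flatMap _ = _
        rw [List.flatMap_assoc]
    | false =>
      refine ⟨fun c => (g c).flatMap (fun d => if d = b then [b] else [b, a]),
        fun c h => ?_, fun u => ?_⟩
      · rw [List.flatMap_eq_nil_iff] at h
        obtain ⟨d, hd⟩ := List.exists_mem_of_ne_nil _ (hg c)
        have := h d hd
        split at this <;> simp_all
      · simp only [List.map_cons, List.foldr_cons, Function.comp_apply, if_false,
          Bool.false_eq_true]
        rw [hμg]
        show (u.flatMap g).flatMap _ = _
        rw [List.flatMap_assoc]

theorem skew_word_not_recurrent {A : Type*} [DecidableEq A] [Inhabited A]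
    (a b : A) (hab : a ≠ b)
    (μ : List A → List A)
    (hμ : ∃ L : List Bool,
      μ = (L.map (fun t => if t then psiA a b else psiB a b)).foldr (· ∘ ·) id)
    (x y : A) (hxy : ({x, y} : Set A) = {a, b}) (l : ℕ)
    (s t : ℕ → A)
    (hs : IsInfImage μ (fun n => if n < l then x else if n = l then y else x) s)
    (ht : IsInfImage μ (fun _ => x) t)
    (w : ℕ → A)
    (hsuffix : ∃ k, ∀ n, w n = s (n + k))
    (hnot : ¬ ∃ k, ∀ n, w n = t (n + k)) :
    ∃ u : List A, InfFactor u w ∧ ∃ N : ℕ, ∀ i ≥ N, ¬ OccursAt u w i := by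
  classical
  obtain ⟨g, hg, hμg⟩ : ∃ g : A → List A, (∀ c, g c ≠ []) ∧ ∀ u, μ u = u.flatMap g := by
    obtain ⟨L, rfl⟩ := hμ
    exact exists_flatMap a b L
  set P := (g x).length with hPdef
  have hP : 0 < P := List.length_pos_iff.mpr (hg x)
  -- the n-th finite "tail approximation"
  set Fn : ℕ → List A := fun n => (List.replicate n x).flatMap g with hFn
  have hFnlen : ∀ n, (Fn n).length = n * P := by
    intro n
    induction n with
    | zero => simp [hFn]
    | succ m ih =>
      simp only [hFn, List.replicate_succ, List.flatMap_cons, List.length_append]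
      rw [show ((List.replicate m x).flatMap g) = Fn m from rfl, ih]
      ring
  have hFnsucc : ∀ n, Fn (n + 1) = g x ++ Fn n := by
    intro n
    simp [hFn, List.replicate_succ, List.flatMap_cons]
  -- t is read off Fn
  have ht' : ∀ n, ∀ k, k < (Fn n).length → (Fn n)[k]! = t k := by
    intro n k hk
    have h0 : List.ofFn (fun _ : Fin n => x) = List.replicate n x := List.ofFn_const n x
    have := ht n k
    rw [hμg, h0] at this
    exact this hk
  -- t is periodic with period P
  have htper : ∀ m, t (m + P) = t m := by
    intro m
    set n := m + P + 1 with hn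
    have hlt : m + P < (Fn (n + 1)).length := by
      rw [hFnlen]
      calc m + P < n := by omega
      _ ≤ (n+1) * P := by nlinarith
    have hlt2 : m < (Fn n).length := by
      rw [hFnlen]; calc m < n := by omega
      _ ≤ n * P := Nat.le_mul_of_pos_right n hP
    have h1 := ht' (n + 1) (m + P) hlt
    rw [hFnsucc, getElem!_append_right' _ _ _ (by rw [← hPdef]; omega),
      show m + P - (g x).length = m by rw [← hPdef]; omega] at h1
    rw [← h1, ht' n m hlt2]
  -- the initial block q
  set q : List A := (List.replicate l x ++ [y]).flatMap g with hq
  set Q := q.length with hQ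
  -- prefix shape for the s-word
  have hofn : ∀ n, List.ofFn (fun i : Fin (l + 1 + n) =>
      (fun m : ℕ => if m < l then x else if m = l then y else x) (i : ℕ))
      = (List.replicate l x ++ [y]) ++ List.replicate n x := by
    intro n
    apply List.ext_getElem
    · simp; omega
    · intro k h1 h2
      simp only [List.getElem_ofFn]
      rcases lt_trichotomy k l with h | h | h
      · rw [if_pos h, List.getElem_append_left (by simpa using by omega : k < ((List.replicate l x ++ [y])).length)]
        rw [List.getElem_append_left (by simpa using h), List.getElem_replicate]
      · rw [if_neg (by omega), if_pos h]
        rw [List.getElem_append_left (by simp; omega : k < ((List.replicate l x ++ [y])).length)]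
        rw [List.getElem_append_right (by simp; omega)]
        simp [h]
      · rw [if_neg (by omega), if_neg (by omega)]
        rw [List.getElem_append_right (by simp; omega)]
        simp
  -- s is read off q ++ Fn n
  have hs' : ∀ n, ∀ k, k < (q ++ Fn n).length → (q ++ Fn n)[k]! = s k := by
    intro n k hk
    have := hs (l + 1 + n) k
    rw [hμg, hofn n, List.flatMap_append] at this
    rw [show (List.replicate n x).flatMap g = Fn n from rfl] at this
    rw [show (List.replicate l x ++ [y]).flatMap g = q from rfl] at this
    exact this hk
  -- relation between s and t
  have hst : ∀ m, s (Q + m) = t m := by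
    intro m
    set n := m + 1 with hn
    have hm : m < (Fn n).length := by
      rw [hFnlen]; calc m < n := by omega
      _ ≤ n * P := Nat.le_mul_of_pos_right n hP
    have h1 := hs' n (Q + m) (by simp [← hQ]; omega)
    rw [getElem!_append_right' _ _ _ (by omega), show Q + m - q.length = m by omega] at h1
    rw [← h1, ht' n m hm]
  -- the tail of s is periodic
  have hstail : ∀ m, Q ≤ m → s (m + P) = s m := by
    intro m hm
    have h1 : m = Q + (m - Q) := by omega
    rw [h1, show Q + (m - Q) + P = Q + (m - Q + P) by omega, hst, hst, htper]
  obtain ⟨k₀, hw⟩ := hsuffix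
  -- k₀ < Q, else w is a suffix of t
  have hk₀ : k₀ < Q := by
    by_contra h
    push_neg at h
    exact hnot ⟨k₀ - Q, fun n => by
      rw [hw n, show n + k₀ = Q + (n + (k₀ - Q)) by omega, hst]⟩
  refine ⟨List.ofFn (fun j : Fin (Q - k₀ + P) => w (0 + (j : ℕ))), ⟨0, occursAt_ofFn w 0 _⟩,
    Q, fun i hi hocc => ?_⟩
  set u : List A := List.ofFn (fun j : Fin (Q - k₀ + P) => w (0 + (j : ℕ))) with hu
  have hlen : u.length = Q - k₀ + P := by simp [hu]
  -- pointwise consequence of the occurrence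
  have hpt : ∀ j, j < Q - k₀ + P → w j = w (i + j) := by
    intro j hj
    have hj' : j < u.length := by omega
    have h4 : u[j]! = w (0 + j) := by
      rw [hu, getElem!_pos _ j (by simpa using hj), List.getElem_ofFn]
    have h3 := congrArg (fun L : List A => L[j]!) hocc
    rw [h4, getElem!_pos _ j (by simpa using hj')] at h3
    simp only [List.getElem_ofFn] at h3
    simpa using h3
  -- s is periodic with period P from k₀ on
  have hper : ∀ m, k₀ ≤ m → s (m + P) = s m := by
    intro m hm
    rcases le_or_gt Q m with h | h
    · exact hstail m h
    · have e1 : s m = w (m - k₀) := by rw [hw, show m - k₀ + k₀ = m by omega]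
      have e2 : s (m + P) = w (m + P - k₀) := by rw [hw, show m + P - k₀ + k₀ = m + P by omega]
      have e3 : w (m - k₀) = w (i + (m - k₀)) := hpt (m - k₀) (by omega)
      have e4 : w (m + P - k₀) = w (i + (m + P - k₀)) := hpt (m + P - k₀) (by omega)
      have e5 : w (i + (m - k₀)) = s (i + m - k₀ + k₀) := by
        rw [hw, show i + (m - k₀) + k₀ = i + m - k₀ + k₀ by omega]
      have e6 : w (i + (m + P - k₀)) = s (i + m - k₀ + k₀ + P) := by
        rw [hw, show i + (m + P - k₀) + k₀ = i + m - k₀ + k₀ + P by omega]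
      have e7 : s (i + m - k₀ + k₀ + P) = s (i + m - k₀ + k₀) := by
        apply hstail; omega
      rw [e2, e4, e6, e7, e1, e3, e5]
  have hiter : ∀ c m, k₀ ≤ m → s (m + c * P) = s m := by
    intro c
    induction c with
    | zero => simp
    | succ d ih =>
      intro m hm
      rw [show m + (d + 1) * P = (m + d * P) + P by ring, hper _ (by omega), ih m hm]
  -- contradiction with hnot
  apply hnot
  have hQP : Q ≤ Q * P := Nat.le_mul_of_pos_right Q hP
  refine ⟨k₀ + Q * P - Q, fun n => ?_⟩
  rw [hw n, ← hiter Q (n + k₀) (by omega),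
    show n + k₀ + Q * P = Q + (n + (k₀ + Q * P - Q)) by omega, hst]
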